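/- Let T : M_{d₁}(ℂ) → M_{d₂}(ℂ) be a quantum channel and let σ, ρ be positive definite states on M_{d₁}(ℂ) such that σ_T := T(σ) and ρ_T := T(ρ) are positive definite. Define the linear map U : M_{d₂}(ℂ) → M_{d₁}(ℂ) by U(X) := σ^{1/2} T*(σ_T^{−1/2} X). Then: (i) the adjoint of U with respect to the Hilbert–Schmidt inner products is U*(Y) = σ_T^{−1/2} T(σ^{1/2} Y) for all Y ∈ M_{d₁}(ℂ); (ii) ⟨U(X), Γ · U(X)⟩ ≤ ⟨X, Γ_T · X⟩ for all X ∈ M_{d₂}(ℂ), where Γ · U(X) and Γ_T · X denote matrix products; (iii) ‖U(X)‖₂ ≤ ‖X‖₂ for all X ∈ M_{d₂}(ℂ). -/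

import Mathlib

open Matrix MeasureTheory Filter Topology Kronecker ComplexOrder

/-- Apply a real function to a matrix via the functional calculus for Hermitian
matrices (and return `0` on non-Hermitian input). -/
noncomputable def mfun {d : ℕ} (f : ℝ → ℝ) (A : Matrix (Fin d) (Fin d) ℂ) :
    Matrix (Fin d) (Fin d) ℂ :=
  if hA : A.IsHermitian then hA.cfc f else 0

/-- Square root of a Hermitian positive semidefinite matrix. -/
noncomputable def msqrt {d : ℕ} (A : Matrix (Fin d) (Fin d) ℂ) : Matrix (Fin d) (Fin d) ℂ :=
  mfun Real.sqrt A

/-- Inverse square root of a Hermitian positive semidefinite matrix (Moore–Penrose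
pseudoinverse of the square root in the singular case, since `(0 : ℝ)⁻¹ = 0`). -/
noncomputable def misqrt {d : ℕ} (A : Matrix (Fin d) (Fin d) ℂ) : Matrix (Fin d) (Fin d) ℂ :=
  mfun (fun x => (Real.sqrt x)⁻¹) A

/-- Inverse of a Hermitian matrix (Moore–Penrose pseudoinverse in the singular case). -/
noncomputable def minv {d : ℕ} (A : Matrix (Fin d) (Fin d) ℂ) : Matrix (Fin d) (Fin d) ℂ :=
  mfun (fun x => x⁻¹) A

/-- Logarithm of a positive definite matrix. -/
noncomputable def mlog {d : ℕ} (A : Matrix (Fin d) (Fin d) ℂ) : Matrix (Fin d) (Fin d) ℂ :=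
  mfun Real.log A

/-- Frobenius (Schatten-2) norm ‖A‖₂ = tr(AᴴA)^(1/2). -/
noncomputable def frob {n : Type*} [Fintype n] (A : Matrix n n ℂ) : ℝ :=
  Real.sqrt (Matrix.trace (Aᴴ * A)).re

/-- Operator norm ‖A‖∞ of a matrix, acting on the Euclidean space ℂᵈ. -/
noncomputable def opNorm {n : Type*} [Fintype n] [DecidableEq n] (A : Matrix n n ℂ) : ℝ :=
  ‖LinearMap.toContinuousLinearMap (Matrix.toEuclideanLin A)‖

/-- The Belavkin–Staszewski relative entropy
`Ŝ_BS(σ‖ρ) = −tr[σ log(σ^{−1/2} ρ σ^{−1/2})]`. -/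
noncomputable def BS {d : ℕ} (σ ρ : Matrix (Fin d) (Fin d) ℂ) : ℝ :=
  -(Matrix.trace (σ * mlog (misqrt σ * ρ * misqrt σ))).re

/-- The maximal f-divergence `Ŝ_f(σ‖ρ) = tr[ρ^{1/2} f(ρ^{−1/2} σ ρ^{−1/2}) ρ^{1/2}]`. -/
noncomputable def hatS {d : ℕ} (f : ℝ → ℝ) (σ ρ : Matrix (Fin d) (Fin d) ℂ) : ℝ :=
  (Matrix.trace (msqrt ρ * mfun f (misqrt ρ * σ * misqrt ρ) * msqrt ρ)).re

/-- The Umegaki relative entropy `D(σ‖ρ) = tr[σ (log σ − log ρ)]`. -/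
noncomputable def relEnt {d : ℕ} (σ ρ : Matrix (Fin d) (Fin d) ℂ) : ℝ :=
  (Matrix.trace (σ * (mlog σ - mlog ρ))).re

/-- The Choi matrix of a linear map between matrix algebras. -/
noncomputable def choi {d₁ d₂ : ℕ} (T : Matrix (Fin d₁) (Fin d₁) ℂ →ₗ[ℂ] Matrix (Fin d₂) (Fin d₂) ℂ) :
    Matrix (Fin d₁ × Fin d₂) (Fin d₁ × Fin d₂) ℂ :=
  Matrix.of fun p q => T (Matrix.single p.1 q.1 1) p.2 q.2

/-- A quantum channel: a completely positive (equivalently, with positive semidefinite Choi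
matrix) trace-preserving linear map. -/
def IsCPTP {d₁ d₂ : ℕ} (T : Matrix (Fin d₁) (Fin d₁) ℂ →ₗ[ℂ] Matrix (Fin d₂) (Fin d₂) ℂ) :
    Prop :=
  (choi T).PosSemidef ∧ ∀ A, (T A).trace = A.trace

/-- Partial trace over the second tensor factor. -/
noncomputable def ptrace2 {d₂ s : ℕ} (M : Matrix (Fin d₂ × Fin s) (Fin d₂ × Fin s) ℂ) :
    Matrix (Fin d₂) (Fin d₂) ℂ :=
  Matrix.of fun i j => ∑ k : Fin s, M (i, k) (j, k)

/-- The Loewner order: `A ≤ B` iff `B - A` is positive semidefinite. -/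
def Loewner {n : ℕ} (A B : Matrix (Fin n) (Fin n) ℂ) : Prop := (B - A).PosSemidef

/-- A function `f : (0,∞) → ℝ` is operator convex. -/
def OperatorConvex (f : ℝ → ℝ) : Prop :=
  ∀ (n : ℕ) (A B : Matrix (Fin n) (Fin n) ℂ), A.PosDef → B.PosDef →
    ∀ t : ℝ, 0 ≤ t → t ≤ 1 →
      Loewner (mfun f ((t : ℂ) • A + ((1 - t : ℝ) : ℂ) • B))
        ((t : ℂ) • mfun f A + ((1 - t : ℝ) : ℂ) • mfun f B)

/-- A function `f : (0,∞) → ℝ` is operator monotone decreasing. -/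
def OperatorAntitone (f : ℝ → ℝ) : Prop :=
  ∀ (n : ℕ) (A B : Matrix (Fin n) (Fin n) ℂ), A.PosDef → B.PosDef →
    Loewner A B → Loewner (mfun f B) (mfun f A)

section cfcAux

variable {d : ℕ} {A : Matrix (Fin d) (Fin d) ℂ}

lemma mfun_of_herm (hA : A.IsHermitian) (f : ℝ → ℝ) : mfun f A = hA.cfc f := dif_pos hA

lemma cfc_herm (hA : A.IsHermitian) (f : ℝ → ℝ) : (hA.cfc f).IsHermitian := by
  show _ = _
  rw [Matrix.IsHermitian.cfc]
  have hD : (diagonal (RCLike.ofReal ∘ f ∘ hA.eigenvalues : Fin d → ℂ))ᴴ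
      = diagonal (RCLike.ofReal ∘ f ∘ hA.eigenvalues : Fin d → ℂ) := by
    have key : (star (RCLike.ofReal ∘ f ∘ hA.eigenvalues) : Fin d → ℂ)
        = RCLike.ofReal ∘ f ∘ hA.eigenvalues := funext fun i => by
      simp [Pi.star_def, Function.comp]
    rw [diagonal_conjTranspose, key]
  simp only [Unitary.conjStarAlgAut_apply, Unitary.coe_star]
  rw [conjTranspose_mul, conjTranspose_mul, hD,
    ← Matrix.star_eq_conjTranspose (star _), star_star, ← Matrix.star_eq_conjTranspose,
    Matrix.mul_assoc]

lemma cfc_mul_cfc (hA : A.IsHermitian) (f g : ℝ → ℝ) :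
    hA.cfc f * hA.cfc g = hA.cfc fun x => f x * g x := by
  have h1 : (star (hA.eigenvectorUnitary : Matrix (Fin d) (Fin d) ℂ)) *
      (hA.eigenvectorUnitary : Matrix (Fin d) (Fin d) ℂ) = 1 :=
    Unitary.star_mul_self_of_mem (SetLike.coe_mem _)
  rw [Matrix.IsHermitian.cfc, Matrix.IsHermitian.cfc, Matrix.IsHermitian.cfc]
  simp only [Unitary.conjStarAlgAut_apply, Unitary.coe_star]
  set U : Matrix (Fin d) (Fin d) ℂ := (hA.eigenvectorUnitary : Matrix (Fin d) (Fin d) ℂ)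
  set D1 : Matrix (Fin d) (Fin d) ℂ := diagonal (RCLike.ofReal ∘ f ∘ hA.eigenvalues)
  set D2 : Matrix (Fin d) (Fin d) ℂ := diagonal (RCLike.ofReal ∘ g ∘ hA.eigenvalues)
  have h2 : star U * (U * (D2 * star U)) = D2 * star U := by
    rw [← Matrix.mul_assoc, h1, Matrix.one_mul]
  have key : (fun i => (RCLike.ofReal ∘ f ∘ hA.eigenvalues) i *
      (RCLike.ofReal ∘ g ∘ hA.eigenvalues) i)
      = (RCLike.ofReal ∘ (fun x => f x * g x) ∘ hA.eigenvalues : Fin d → ℂ) :=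
    funext fun i => by simp [Function.comp]
  calc U * D1 * star U * (U * D2 * star U)
      = U * (D1 * (star U * (U * (D2 * star U)))) := by simp only [Matrix.mul_assoc]
    _ = U * (D1 * D2) * star U := by rw [h2]; simp only [Matrix.mul_assoc]
    _ = _ := by rw [diagonal_mul_diagonal, key]

lemma cfc_eq_one (hA : A.IsHermitian) (f : ℝ → ℝ)
    (h : ∀ i, f (hA.eigenvalues i) = 1) : hA.cfc f = 1 := by
  rw [Matrix.IsHermitian.cfc]
  have key : (RCLike.ofReal ∘ f ∘ hA.eigenvalues : Fin d → ℂ) = fun _ => 1 :=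
    funext fun i => by simp [Function.comp, h i]
  rw [key, diagonal_one]
  simp only [Unitary.conjStarAlgAut_apply, Unitary.coe_star]
  rw [Matrix.mul_one]
  exact Unitary.mul_star_self_of_mem (SetLike.coe_mem _)

lemma cfc_congr_eig (hA : A.IsHermitian) (f g : ℝ → ℝ)
    (h : ∀ i, f (hA.eigenvalues i) = g (hA.eigenvalues i)) : hA.cfc f = hA.cfc g := by
  have key : (RCLike.ofReal ∘ f ∘ hA.eigenvalues : Fin d → ℂ)
      = RCLike.ofReal ∘ g ∘ hA.eigenvalues := funext fun i => by simp [Function.comp, h i]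
  rw [Matrix.IsHermitian.cfc, Matrix.IsHermitian.cfc, key]

lemma hermCfc_id (hA : A.IsHermitian) : hA.cfc (fun x => x) = A := by
  rw [Matrix.IsHermitian.cfc]
  exact hA.spectral_theorem.symm

lemma msqrt_herm (hA : A.IsHermitian) : (msqrt A)ᴴ = msqrt A := by
  rw [msqrt, mfun_of_herm hA]; exact cfc_herm hA _

lemma misqrt_herm (hA : A.IsHermitian) : (misqrt A)ᴴ = misqrt A := by
  rw [misqrt, mfun_of_herm hA]; exact cfc_herm hA _

lemma misqrt_mul_msqrt (hA : A.PosDef) : misqrt A * msqrt A = 1 := by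
  rw [msqrt, misqrt, mfun_of_herm hA.1, mfun_of_herm hA.1, cfc_mul_cfc]
  refine cfc_eq_one _ _ fun i => ?_
  have hx := hA.eigenvalues_pos i
  exact inv_mul_cancel₀ (ne_of_gt (Real.sqrt_pos.mpr hx))

lemma msqrt_mul_misqrt (hA : A.PosDef) : msqrt A * misqrt A = 1 := by
  rw [msqrt, misqrt, mfun_of_herm hA.1, mfun_of_herm hA.1, cfc_mul_cfc]
  refine cfc_eq_one _ _ fun i => ?_
  have hx := hA.eigenvalues_pos i
  exact mul_inv_cancel₀ (ne_of_gt (Real.sqrt_pos.mpr hx))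

lemma msqrt_mul_msqrt (hA : A.PosDef) : msqrt A * msqrt A = A := by
  rw [msqrt, mfun_of_herm hA.1, cfc_mul_cfc]
  rw [cfc_congr_eig hA.1 _ (fun x => x) fun i => Real.mul_self_sqrt (hA.eigenvalues_pos i).le]
  exact hermCfc_id hA.1

lemma mul_misqrt_eq_msqrt (hA : A.PosDef) : A * misqrt A = msqrt A := by
  have key : hA.1.cfc (fun x => x) * hA.1.cfc (fun x => (Real.sqrt x)⁻¹)
      = hA.1.cfc Real.sqrt := by
    rw [cfc_mul_cfc]
    refine cfc_congr_eig _ _ _ fun i => ?_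
    have hx := hA.eigenvalues_pos i
    have h1 : Real.sqrt (hA.1.eigenvalues i) ≠ 0 := ne_of_gt (Real.sqrt_pos.mpr hx)
    have h2 : Real.sqrt (hA.1.eigenvalues i) * Real.sqrt (hA.1.eigenvalues i)
        = hA.1.eigenvalues i := Real.mul_self_sqrt hx.le
    field_simp
    rw [sq, h2]
  calc A * misqrt A
      = hA.1.cfc (fun x => x) * hA.1.cfc (fun x => (Real.sqrt x)⁻¹) := by
        rw [hermCfc_id hA.1, misqrt, mfun_of_herm hA.1]
    _ = hA.1.cfc Real.sqrt := key
    _ = msqrt A := by rw [msqrt, mfun_of_herm hA.1]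

lemma misqrt_mul_mul_misqrt (hA : A.PosDef) : misqrt A * A * misqrt A = 1 := by
  rw [Matrix.mul_assoc, mul_misqrt_eq_msqrt hA]
  exact misqrt_mul_msqrt hA

end cfcAux

section traceAux

variable {n m : Type*} [Fintype n] [Fintype m]

lemma trace_form_star (A B : Matrix n m ℂ) :
    Matrix.trace (Aᴴ * B) = star (Matrix.trace (Bᴴ * A)) := by
  rw [← Matrix.trace_conjTranspose, conjTranspose_mul, conjTranspose_conjTranspose]

lemma trace_sq_re_nonneg (M : Matrix n m ℂ) : 0 ≤ (Matrix.trace (Mᴴ * M)).re := by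
  rw [Matrix.trace, Complex.re_sum]
  refine Finset.sum_nonneg fun j _ => ?_
  rw [Matrix.diag, Matrix.mul_apply, Complex.re_sum]
  refine Finset.sum_nonneg fun i _ => ?_
  rw [conjTranspose_apply, Complex.star_def, mul_comm, Complex.mul_conj]
  simpa using Complex.normSq_nonneg (M i j)

lemma eq_zero_of_trace_sq (M : Matrix n m ℂ) (h : Matrix.trace (Mᴴ * M) = 0) : M = 0 := by
  have hre : ∑ j, ∑ i, Complex.normSq (M i j) = 0 := by
    have h2 := congrArg Complex.re h
    rw [Matrix.trace, Complex.re_sum, Complex.zero_re] at h2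
    rw [← h2]
    refine Finset.sum_congr rfl fun j _ => ?_
    rw [Matrix.diag, Matrix.mul_apply, Complex.re_sum]
    refine Finset.sum_congr rfl fun i _ => ?_
    rw [conjTranspose_apply, Complex.star_def, mul_comm, Complex.mul_conj]
    simp
  ext i j
  have h3 : ∀ j' ∈ Finset.univ, (0:ℝ) ≤ ∑ i, Complex.normSq (M i j') :=
    fun j' _ => Finset.sum_nonneg fun i _ => Complex.normSq_nonneg _
  have h4 := (Finset.sum_eq_zero_iff_of_nonneg h3).mp hre j (Finset.mem_univ j)
  have h5 := (Finset.sum_eq_zero_iff_of_nonneg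
    (fun i' _ => Complex.normSq_nonneg (M i' j))).mp h4 i (Finset.mem_univ i)
  simpa using Complex.normSq_eq_zero.mp h5

lemma posSemidef_iff_eq_transpose_mul_self' {A : Matrix n n ℂ} (hA : A.PosSemidef) :
    ∃ B : Matrix n n ℂ, A = Bᴴ * B := by
  classical
  open scoped MatrixOrder Matrix.Norms.L2Operator in
  obtain ⟨B, rfl⟩ := CStarAlgebra.nonneg_iff_eq_star_mul_self.mp hA.nonneg
  exact ⟨B, rfl⟩

lemma trace_psd_psd {A B : Matrix n n ℂ} [DecidableEq n] (hA : A.PosSemidef) (hB : B.PosSemidef) :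
    0 ≤ (Matrix.trace (A * B)).re := by
  obtain ⟨R, hR⟩ := posSemidef_iff_eq_transpose_mul_self' hA
  obtain ⟨S, hS⟩ := posSemidef_iff_eq_transpose_mul_self' hB
  have key : Matrix.trace (A * B) = Matrix.trace ((S * Rᴴ)ᴴ * (S * Rᴴ)) := by
    rw [hR, hS, conjTranspose_mul, conjTranspose_conjTranspose]
    calc Matrix.trace (Rᴴ * R * (Sᴴ * S))
        = Matrix.trace (Rᴴ * (R * (Sᴴ * S))) := by rw [Matrix.mul_assoc]
      _ = Matrix.trace ((R * (Sᴴ * S)) * Rᴴ) := by rw [Matrix.trace_mul_comm]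
      _ = Matrix.trace (R * Sᴴ * (S * Rᴴ)) := by simp only [Matrix.mul_assoc]
  rw [key]
  exact trace_sq_re_nonneg _

end traceAux
section krausAux

variable {d₁ d₂ : ℕ}

lemma aux_choi_expand (T : Matrix (Fin d₁) (Fin d₁) ℂ →ₗ[ℂ] Matrix (Fin d₂) (Fin d₂) ℂ)
    (A : Matrix (Fin d₁) (Fin d₁) ℂ) (p2 q2 : Fin d₂) :
    T A p2 q2 = ∑ p1 : Fin d₁, ∑ q1 : Fin d₁, A p1 q1 * choi T (p1, p2) (q1, q2) := by
  conv_lhs => rw [matrix_eq_sum_single A]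
  rw [map_sum, Matrix.sum_apply]
  refine Finset.sum_congr rfl fun p1 _ => ?_
  rw [map_sum, Matrix.sum_apply]
  refine Finset.sum_congr rfl fun q1 _ => ?_
  have h : single p1 q1 (A p1 q1) = A p1 q1 • single p1 q1 1 := by
    rw [smul_single, smul_eq_mul, mul_one]
  rw [h, _root_.map_smul, Matrix.smul_apply, smul_eq_mul]
  rfl

lemma aux_kraus (T : Matrix (Fin d₁) (Fin d₁) ℂ →ₗ[ℂ] Matrix (Fin d₂) (Fin d₂) ℂ)
    (hT : IsCPTP T) :
    ∃ K : Fin d₁ × Fin d₂ → Matrix (Fin d₂) (Fin d₁) ℂ,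
      (∀ A, T A = ∑ i, K i * A * (K i)ᴴ) ∧ (∑ i, (K i)ᴴ * K i) = 1 := by
  obtain ⟨B, hB⟩ := posSemidef_iff_eq_transpose_mul_self' hT.1
  set K : Fin d₁ × Fin d₂ → Matrix (Fin d₂) (Fin d₁) ℂ :=
    fun i => Matrix.of fun p2 p1 => star (B i (p1, p2)) with hK
  have hrep : ∀ A, T A = ∑ i, K i * A * (K i)ᴴ := by
    intro A
    ext p2 q2
    rw [aux_choi_expand T A p2 q2, Matrix.sum_apply]
    have hRHS : ∀ i, (K i * A * (K i)ᴴ) p2 q2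
        = ∑ p1, ∑ q1, star (B i (p1, p2)) * A p1 q1 * B i (q1, q2) := by
      intro i
      calc (K i * A * (K i)ᴴ) p2 q2
          = ∑ q1, ∑ p1, star (B i (p1, p2)) * A p1 q1 * B i (q1, q2) := by
            rw [Matrix.mul_apply]
            refine Finset.sum_congr rfl fun q1 _ => ?_
            rw [Matrix.conjTranspose_apply, Matrix.mul_apply, Finset.sum_mul]
            refine Finset.sum_congr rfl fun p1 _ => ?_
            simp [hK]
        _ = _ := Finset.sum_comm
    calc ∑ p1, ∑ q1, A p1 q1 * choi T (p1, p2) (q1, q2)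
        = ∑ p1, ∑ q1, ∑ i, A p1 q1 * (star (B i (p1, p2)) * B i (q1, q2)) := by
          refine Finset.sum_congr rfl fun p1 _ => Finset.sum_congr rfl fun q1 _ => ?_
          rw [hB, Matrix.mul_apply, Finset.mul_sum]
          refine Finset.sum_congr rfl fun i _ => ?_
          rw [Matrix.conjTranspose_apply]
      _ = ∑ p1, ∑ i, ∑ q1, A p1 q1 * (star (B i (p1, p2)) * B i (q1, q2)) :=
          Finset.sum_congr rfl fun p1 _ => Finset.sum_comm
      _ = ∑ i, ∑ p1, ∑ q1, A p1 q1 * (star (B i (p1, p2)) * B i (q1, q2)) := Finset.sum_comm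
      _ = ∑ i, (K i * A * (K i)ᴴ) p2 q2 := by
          refine Finset.sum_congr rfl fun i _ => ?_
          rw [hRHS i]
          refine Finset.sum_congr rfl fun p1 _ => Finset.sum_congr rfl fun q1 _ => ?_
          ring
  refine ⟨K, hrep, ?_⟩
  ext a b
  have h1 := hT.2 (single a b 1)
  have h2 : (T (single a b 1)).trace
      = ∑ p2 : Fin d₂, ∑ i : Fin d₁ × Fin d₂, star (B i (a, p2)) * B i (b, p2) := by
    rw [Matrix.trace]
    refine Finset.sum_congr rfl fun p2 _ => ?_
    show T (single a b 1) p2 p2 = _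
    rw [aux_choi_expand]
    calc ∑ p1, ∑ q1, single a b 1 p1 q1 * choi T (p1, p2) (q1, p2)
        = choi T (a, p2) (b, p2) := by
          simp [single, Matrix.of_apply, ite_and, Finset.sum_ite_eq, Finset.mem_univ]
      _ = ∑ i, star (B i (a, p2)) * B i (b, p2) := by
          rw [hB, Matrix.mul_apply]
          exact Finset.sum_congr rfl fun i _ => by rw [Matrix.conjTranspose_apply]
  have h3 : Matrix.trace (single a b (1:ℂ)) = if a = b then (1:ℂ) else 0 := by
    by_cases hab : a = b
    · subst hab
      simp [Matrix.trace, Matrix.diag, single, Matrix.of_apply]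
    · rw [if_neg hab, Matrix.trace]
      refine Finset.sum_eq_zero fun c _ => ?_
      show single a b (1:ℂ) c c = 0
      rw [single, Matrix.of_apply, if_neg]
      rintro ⟨rfl, h⟩
      exact hab h.symm
  calc (∑ i, (K i)ᴴ * K i) a b
      = ∑ i, ∑ p2, B i (a, p2) * star (B i (b, p2)) := by
        rw [Matrix.sum_apply]
        refine Finset.sum_congr rfl fun i _ => ?_
        rw [Matrix.mul_apply]
        refine Finset.sum_congr rfl fun p2 _ => ?_
        rw [Matrix.conjTranspose_apply]
        simp [hK]
    _ = star ((T (single a b 1)).trace) := by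
        rw [h2, star_sum]
        rw [Finset.sum_comm]
        refine Finset.sum_congr rfl fun i _ => ?_
        rw [star_sum]
        refine Finset.sum_congr rfl fun p2 _ => ?_
        rw [StarMul.star_mul, star_star]
        ring
    _ = star ((single a b (1:ℂ)).trace) := by rw [h1]
    _ = (1 : Matrix (Fin d₁) (Fin d₁) ℂ) a b := by
        rw [h3]
        by_cases hab : a = b <;> simp [hab, Matrix.one_apply]

end krausAux
section ksAux

variable {d₁ d₂ : ℕ}

lemma aux_KS (K : Fin d₁ × Fin d₂ → Matrix (Fin d₂) (Fin d₁) ℂ)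
    (hK : (∑ i, (K i)ᴴ * K i) = 1) (Z : Matrix (Fin d₂) (Fin d₂) ℂ) :
    ((∑ i, (K i)ᴴ * (Z * Zᴴ) * K i)
      - (∑ i, (K i)ᴴ * Z * K i) * (∑ i, (K i)ᴴ * Z * K i)ᴴ).PosSemidef := by
  set P : Matrix (Fin d₁) (Fin d₁) ℂ := ∑ i, (K i)ᴴ * Z * K i with hP
  set Q : Matrix (Fin d₁) (Fin d₁) ℂ := ∑ i, (K i)ᴴ * (Z * Zᴴ) * K i with hQ
  have hblock : ∀ i : Fin d₁ × Fin d₂,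
      (fromBlocks (Zᴴ * K i) (K i) (0 : Matrix (Fin d₂) (Fin d₁) ℂ) 0)ᴴ
        * (fromBlocks (Zᴴ * K i) (K i) (0 : Matrix (Fin d₂) (Fin d₁) ℂ) 0)
      = fromBlocks ((K i)ᴴ * (Z * Zᴴ) * K i) ((K i)ᴴ * Z * K i)
          ((K i)ᴴ * Zᴴ * K i) ((K i)ᴴ * K i) := by
    intro i
    rw [fromBlocks_conjTranspose, fromBlocks_multiply]
    simp [Matrix.conjTranspose_mul, Matrix.conjTranspose_conjTranspose, Matrix.mul_assoc]
  have hsum : fromBlocks Q P Pᴴ (1 : Matrix (Fin d₁) (Fin d₁) ℂ)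
      = ∑ i, (fromBlocks (Zᴴ * K i) (K i) (0 : Matrix (Fin d₂) (Fin d₁) ℂ) 0)ᴴ
        * (fromBlocks (Zᴴ * K i) (K i) (0 : Matrix (Fin d₂) (Fin d₁) ℂ) 0) := by
    rw [Finset.sum_congr rfl fun i _ => hblock i]
    have hPH : Pᴴ = ∑ i, (K i)ᴴ * Zᴴ * K i := by
      rw [hP, Matrix.conjTranspose_sum]
      refine Finset.sum_congr rfl fun i _ => ?_
      simp [Matrix.conjTranspose_mul, Matrix.mul_assoc]
    ext x y
    cases x with
    | inl x => cases y with
      | inl y => simp [Matrix.sum_apply, Matrix.fromBlocks_apply₁₁, hQ]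
      | inr y => simp [Matrix.sum_apply, Matrix.fromBlocks_apply₁₂, hP]
    | inr x => cases y with
      | inl y => simp [Matrix.sum_apply, Matrix.fromBlocks_apply₂₁, hPH, ← hK]
      | inr y => simp [Matrix.sum_apply, Matrix.fromBlocks_apply₂₂, ← hK]
  have hM : (fromBlocks Q P Pᴴ (1 : Matrix (Fin d₁) (Fin d₁) ℂ)).PosSemidef := by
    rw [hsum]
    refine Finset.sum_induction _ _ (fun a b ha hb => ha.add hb) Matrix.PosSemidef.zero
      fun i _ => Matrix.posSemidef_conjTranspose_mul_self _
  haveI : Invertible (1 : Matrix (Fin d₁) (Fin d₁) ℂ) := invertibleOne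
  have h1 : (1 : Matrix (Fin d₁) (Fin d₁) ℂ).PosDef := Matrix.PosDef.one
  have := (Matrix.PosDef.fromBlocks₂₂ Q P h1).mp hM
  simpa using this

end ksAux
theorem stmt2 {d₁ d₂ : ℕ}
    (T : Matrix (Fin d₁) (Fin d₁) ℂ →ₗ[ℂ] Matrix (Fin d₂) (Fin d₂) ℂ)
    (hT : IsCPTP T)
    (Tadj : Matrix (Fin d₂) (Fin d₂) ℂ → Matrix (Fin d₁) (Fin d₁) ℂ)
    (hTadj : ∀ (X : Matrix (Fin d₂) (Fin d₂) ℂ) (Y : Matrix (Fin d₁) (Fin d₁) ℂ),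
      Matrix.trace ((T Y)ᴴ * X) = Matrix.trace (Yᴴ * Tadj X))
    (σ ρ : Matrix (Fin d₁) (Fin d₁) ℂ)
    (hσ : σ.PosDef) (hσtr : σ.trace = 1)
    (hρ : ρ.PosDef) (hρtr : ρ.trace = 1)
    (hσT : (T σ).PosDef) (hρT : (T ρ).PosDef) :
    let U : Matrix (Fin d₂) (Fin d₂) ℂ → Matrix (Fin d₁) (Fin d₁) ℂ :=
      fun X => msqrt σ * Tadj (misqrt (T σ) * X)
    (∀ (X : Matrix (Fin d₂) (Fin d₂) ℂ) (Y : Matrix (Fin d₁) (Fin d₁) ℂ),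
        Matrix.trace ((U X)ᴴ * Y) = Matrix.trace (Xᴴ * (misqrt (T σ) * T (msqrt σ * Y)))) ∧
    (∀ X : Matrix (Fin d₂) (Fin d₂) ℂ,
        (Matrix.trace ((U X)ᴴ * ((misqrt σ * ρ * misqrt σ) * U X))).re ≤
          (Matrix.trace (Xᴴ * ((misqrt (T σ) * T ρ * misqrt (T σ)) * X))).re) ∧
    (∀ X : Matrix (Fin d₂) (Fin d₂) ℂ, frob (U X) ≤ frob X) := by
  intro U
  have hU : ∀ X, U X = msqrt σ * Tadj (misqrt (T σ) * X) := fun X => rfl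
  obtain ⟨K, hKrep, hK1⟩ := aux_kraus T hT
  -- identification of the adjoint
  have hΦ : ∀ X, Tadj X = ∑ i, (K i)ᴴ * X * K i := by
    intro X
    have hform : ∀ Y, Matrix.trace (Yᴴ * Tadj X)
        = Matrix.trace (Yᴴ * ∑ i, (K i)ᴴ * X * K i) := by
      intro Y
      rw [← hTadj X Y, hKrep Y, Matrix.conjTranspose_sum, Finset.sum_mul, Matrix.trace_sum,
        Finset.mul_sum, Matrix.trace_sum]
      refine Finset.sum_congr rfl fun i _ => ?_
      calc Matrix.trace ((K i * Y * (K i)ᴴ)ᴴ * X)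
          = Matrix.trace (K i * (Yᴴ * ((K i)ᴴ * X))) := by
            simp [Matrix.conjTranspose_mul, Matrix.mul_assoc]
        _ = Matrix.trace ((Yᴴ * ((K i)ᴴ * X)) * K i) := Matrix.trace_mul_comm _ _
        _ = Matrix.trace (Yᴴ * ((K i)ᴴ * X * K i)) := by simp [Matrix.mul_assoc]
    have hzero : Matrix.trace ((Tadj X - ∑ i, (K i)ᴴ * X * K i)ᴴ
        * (Tadj X - ∑ i, (K i)ᴴ * X * K i)) = 0 := by
      rw [Matrix.mul_sub, Matrix.trace_sub, hform]
      ring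
    have := eq_zero_of_trace_sq _ hzero
    exact sub_eq_zero.mp this
  -- T is *-preserving on Hermitian inputs
  have hTherm : ∀ Y : Matrix (Fin d₁) (Fin d₁) ℂ, Yᴴ = Y → (T Y)ᴴ = T Y := by
    intro Y hY
    rw [hKrep, Matrix.conjTranspose_sum]
    refine Finset.sum_congr rfl fun i _ => ?_
    simp [Matrix.conjTranspose_mul, Matrix.mul_assoc, hY]
  -- adjoint swap identity
  have hswap : ∀ (M : Matrix (Fin d₂) (Fin d₂) ℂ) (N : Matrix (Fin d₁) (Fin d₁) ℂ),
      Matrix.trace ((Tadj M)ᴴ * N) = Matrix.trace (Mᴴ * T N) := by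
    intro M N
    calc Matrix.trace ((Tadj M)ᴴ * N) = star (Matrix.trace (Nᴴ * Tadj M)) :=
        trace_form_star _ _
      _ = star (Matrix.trace ((T N)ᴴ * M)) := by rw [hTadj]
      _ = Matrix.trace (Mᴴ * T N) := (trace_form_star _ _).symm
  -- hermiticity and algebra of square roots
  have hherm_s : (msqrt σ)ᴴ = msqrt σ := msqrt_herm hσ.1
  have hherm_i : (misqrt σ)ᴴ = misqrt σ := misqrt_herm hσ.1
  have hherm_t : (misqrt (T σ))ᴴ = misqrt (T σ) := misqrt_herm hσT.1
  have hsi : misqrt σ * msqrt σ = 1 := misqrt_mul_msqrt hσ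
  have his : msqrt σ * misqrt σ = 1 := msqrt_mul_misqrt hσ
  have hss : msqrt σ * msqrt σ = σ := msqrt_mul_msqrt hσ
  have htt : misqrt (T σ) * T σ * misqrt (T σ) = 1 := misqrt_mul_mul_misqrt hσT
  -- the key inequality
  have hkey : ∀ (ρ' : Matrix (Fin d₁) (Fin d₁) ℂ), ρ'.PosSemidef →
      ∀ Z : Matrix (Fin d₂) (Fin d₂) ℂ,
      (Matrix.trace ((Tadj Z)ᴴ * (ρ' * Tadj Z))).re
        ≤ (Matrix.trace (Zᴴ * (T ρ' * Z))).re := by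
    intro ρ' hρ' Z
    have hD : (Tadj (Z * Zᴴ) - Tadj Z * (Tadj Z)ᴴ).PosSemidef := by
      rw [hΦ, hΦ]
      exact aux_KS K hK1 Z
    have e1 : Matrix.trace ((Tadj Z)ᴴ * (ρ' * Tadj Z))
        = Matrix.trace (ρ' * (Tadj Z * (Tadj Z)ᴴ)) := by
      calc Matrix.trace ((Tadj Z)ᴴ * (ρ' * Tadj Z))
          = Matrix.trace ((ρ' * Tadj Z) * (Tadj Z)ᴴ) := Matrix.trace_mul_comm _ _
        _ = Matrix.trace (ρ' * (Tadj Z * (Tadj Z)ᴴ)) := by rw [Matrix.mul_assoc]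
    have e2 : Matrix.trace (Zᴴ * (T ρ' * Z)) = Matrix.trace (ρ' * Tadj (Z * Zᴴ)) := by
      calc Matrix.trace (Zᴴ * (T ρ' * Z))
          = Matrix.trace ((T ρ' * Z) * Zᴴ) := Matrix.trace_mul_comm _ _
        _ = Matrix.trace (T ρ' * (Z * Zᴴ)) := by rw [Matrix.mul_assoc]
        _ = Matrix.trace ((T ρ')ᴴ * (Z * Zᴴ)) := by rw [hTherm ρ' hρ'.1]
        _ = Matrix.trace (ρ'ᴴ * Tadj (Z * Zᴴ)) := hTadj _ _
        _ = Matrix.trace (ρ' * Tadj (Z * Zᴴ)) := by rw [hρ'.1]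
    have h3 := trace_psd_psd hρ' hD
    rw [Matrix.mul_sub, Matrix.trace_sub, Complex.sub_re] at h3
    rw [e1, e2]
    linarith
  refine ⟨?_, ?_, ?_⟩
  · -- part (i)
    intro X Y
    rw [hU, Matrix.conjTranspose_mul, hherm_s]
    calc Matrix.trace ((Tadj (misqrt (T σ) * X))ᴴ * msqrt σ * Y)
        = Matrix.trace ((Tadj (misqrt (T σ) * X))ᴴ * (msqrt σ * Y)) := by
          rw [Matrix.mul_assoc]
      _ = Matrix.trace ((misqrt (T σ) * X)ᴴ * T (msqrt σ * Y)) := hswap _ _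
      _ = Matrix.trace (Xᴴ * (misqrt (T σ) * T (msqrt σ * Y))) := by
          rw [Matrix.conjTranspose_mul, hherm_t, Matrix.mul_assoc]
  · -- part (ii)
    intro X
    set Z : Matrix (Fin d₂) (Fin d₂) ℂ := misqrt (T σ) * X with hZ
    set W : Matrix (Fin d₁) (Fin d₁) ℂ := Tadj Z with hW
    have eA : misqrt σ * (msqrt σ * W) = W := by
      rw [← Matrix.mul_assoc, hsi, Matrix.one_mul]
    have eB : msqrt σ * (misqrt σ * (ρ * W)) = ρ * W := by
      rw [← Matrix.mul_assoc, his, Matrix.one_mul]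
    have hL : (U X)ᴴ * ((misqrt σ * ρ * misqrt σ) * U X) = Wᴴ * (ρ * W) := by
      rw [hU, Matrix.conjTranspose_mul, hherm_s]
      calc (Wᴴ * msqrt σ) * ((misqrt σ * ρ * misqrt σ) * (msqrt σ * W))
          = Wᴴ * (msqrt σ * (misqrt σ * (ρ * (misqrt σ * (msqrt σ * W))))) := by
            simp only [Matrix.mul_assoc]
        _ = Wᴴ * (ρ * W) := by rw [eA, eB]
    have hR : Xᴴ * ((misqrt (T σ) * T ρ * misqrt (T σ)) * X) = Zᴴ * (T ρ * Z) := by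
      rw [hZ, Matrix.conjTranspose_mul, hherm_t]
      simp only [Matrix.mul_assoc]
    rw [hL, hR]
    exact hkey ρ hρ.posSemidef Z
  · -- part (iii)
    intro X
    set Z : Matrix (Fin d₂) (Fin d₂) ℂ := misqrt (T σ) * X with hZ
    set W : Matrix (Fin d₁) (Fin d₁) ℂ := Tadj Z with hW
    have hL : (U X)ᴴ * U X = Wᴴ * (σ * W) := by
      rw [hU, Matrix.conjTranspose_mul, hherm_s]
      calc (Wᴴ * msqrt σ) * (msqrt σ * W)
          = Wᴴ * (msqrt σ * (msqrt σ * W)) := by simp only [Matrix.mul_assoc]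
        _ = Wᴴ * (σ * W) := by rw [← Matrix.mul_assoc (msqrt σ) (msqrt σ) W, hss]
    have hR : Zᴴ * (T σ * Z) = Xᴴ * X := by
      rw [hZ, Matrix.conjTranspose_mul, hherm_t]
      calc (Xᴴ * misqrt (T σ)) * (T σ * (misqrt (T σ) * X))
          = Xᴴ * ((misqrt (T σ) * T σ * misqrt (T σ)) * X) := by
            simp only [Matrix.mul_assoc]
        _ = Xᴴ * X := by rw [htt, Matrix.one_mul]
    rw [frob, frob]
    refine Real.sqrt_le_sqrt ?_
    calc (Matrix.trace ((U X)ᴴ * U X)).re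
        = (Matrix.trace (Wᴴ * (σ * W))).re := by rw [hL]
      _ ≤ (Matrix.trace (Zᴴ * (T σ * Z))).re := hkey σ hσ.posSemidef Z
      _ = (Matrix.trace (Xᴴ * X)).re := by rw [hR]
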